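/- Suppose |F| ≥ 4. Let S be a set of five points of PG(n-1,F) and let p ∈ S. Then there exists a hyperplane H of PG(n-1,F) such that p ⊆ H and q ⊄ H for every q ∈ S with q ≠ p (i.e., H intersects the set S precisely in the point p). -/

import Mathlib

open Module Submodule

/-- A vector space over a field with at least `l.length` elements is not covered by
`l.length` proper subspaces. -/
lemma avoid_list {F M : Type*} [Field F] [AddCommGroup M] [Module F M] :
    ∀ l : List (Submodule F M), (∀ B ∈ l, B ≠ ⊤) →
      (l.length : Cardinal) ≤ Cardinal.mk F → ∃ x : M, ∀ B ∈ l, x ∉ B := by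
  intro l
  induction l with
  | nil => exact fun _ _ => ⟨0, by simp⟩
  | cons B l ih =>
    intro hl hcard
    have hcard' : (l.length : Cardinal) ≤ Cardinal.mk F := by
      refine le_trans ?_ hcard
      exact_mod_cast Nat.cast_le.mpr (Nat.le_succ _)
    obtain ⟨x, hx⟩ := ih (fun B' h => hl B' (List.mem_cons_of_mem _ h)) hcard'
    have hBtop : B ≠ ⊤ := hl B List.mem_cons_self
    obtain ⟨w, hw⟩ : ∃ w, w ∉ B := by
      by_contra h
      push_neg at h
      exact hBtop (eq_top_iff.mpr fun y _ => h y)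
    by_cases hxB : x ∈ B
    · rcases List.eq_nil_or_concat l with hnil | _
      · subst hnil
        exact ⟨w, by simpa using hw⟩
      have hlne : l ≠ [] := by rename_i h; obtain ⟨_, _, rfl⟩ := h; simp
      have hx0 : x ≠ 0 := by
        intro h0
        obtain ⟨B', hB'⟩ := List.exists_mem_of_ne_nil l hlne
        exact hx B' hB' (h0 ▸ (B' : Submodule F M).zero_mem)
      by_contra hcon
      push_neg at hcon
      -- every w + t • x lies in some member of l
      have key : ∀ t : F, ∃ i : Fin l.length, w + t • x ∈ l.get i := by
        intro t
        have hmem : w + t • x ∉ B := fun h => hw (by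
          have : (w + t • x) - t • x ∈ B := B.sub_mem h (B.smul_mem t hxB)
          simpa using this)
        obtain ⟨B', hB', hB'mem⟩ := hcon (w + t • x)
        rcases List.mem_cons.mp hB' with rfl | hB'l
        · exact absurd hB'mem hmem
        · obtain ⟨i, hi⟩ := List.get_of_mem hB'l
          exact ⟨i, hi ▸ hB'mem⟩
      choose g hg using key
      have hginj : Function.Injective g := by
        intro t t' htt
        by_contra hne
        have h1 := hg t
        have h2 := hg t'
        rw [htt] at h1
        have : (w + t • x) - (w + t' • x) ∈ l.get (g t') := (l.get (g t')).sub_mem h1 h2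
        have hxmem : (t - t') • x ∈ l.get (g t') := by
          have e : (w + t • x) - (w + t' • x) = (t - t') • x := by
            rw [sub_smul]; abel
          rwa [e] at this
        have : x ∈ l.get (g t') := by
          have := (l.get (g t')).smul_mem (t - t')⁻¹ hxmem
          rwa [inv_smul_smul₀ (sub_ne_zero.mpr hne)] at this
        exact hx _ (l.get_mem _) this
      have hle : Cardinal.mk F ≤ l.length := by
        have hinj2 : Function.Injective (fun t => ULift.up.{_} (g t)) :=
          fun a b h => hginj (congrArg ULift.down h)
        have := Cardinal.mk_le_of_injective hinj2
        simpa using this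
      have : ((l.length + 1 : ℕ) : Cardinal) ≤ (l.length : Cardinal) :=
        le_trans (by exact_mod_cast hcard) hle
      have : (l.length + 1 : ℕ) ≤ l.length := by exact_mod_cast this
      omega
    · refine ⟨x, ?_⟩
      intro B' hB'
      rcases List.mem_cons.mp hB' with rfl | hB'l
      · exact hxB
      · exact hx B' hB'l

lemma finrank_dualAnnihilator {F : Type*} [Field F] {n : ℕ} (W : Submodule F (Fin n → F)) :
    Module.finrank F W.dualAnnihilator = n - Module.finrank F W := by
  have h : Module.finrank F ((Fin n → F) ⧸ W) = Module.finrank F W.dualAnnihilator :=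
    LinearEquiv.finrank_eq (Subspace.quotEquivAnnihilator W)
  have h2 := Submodule.finrank_quotient_add_finrank W
  have h3 : Module.finrank F (Fin n → F) = n := Module.finrank_fin_fun F
  omega


lemma avoid_finset {F M : Type*} [Field F] [AddCommGroup M] [Module F M]
    (s : Finset (Submodule F M)) (hs : ∀ B ∈ s, B ≠ ⊤)
    (hcard : (s.card : Cardinal) ≤ Cardinal.mk F) : ∃ x : M, ∀ B ∈ s, x ∉ B := by
  obtain ⟨x, hx⟩ := avoid_list s.toList (fun B hB => hs B (Finset.mem_toList.mp hB))
    (by simpa using hcard)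
  exact ⟨x, fun B hB => hx B (Finset.mem_toList.mpr hB)⟩

theorem stmt13 {F : Type*} [Field F] {n : ℕ} (hn : 3 ≤ n)
    (hF : 4 ≤ Cardinal.mk F)
    (S : Set (Submodule F (Fin n → F))) (hS : ∀ q ∈ S, Module.finrank F q = 1)
    (hcard : S.ncard = 5)
    (p : Submodule F (Fin n → F)) (hp : p ∈ S) :
    ∃ H : Submodule F (Fin n → F), Module.finrank F H = n - 1 ∧ p ≤ H ∧
      ∀ q ∈ S, q ≠ p → ¬ q ≤ H := by
  classical
  have hSfin : S.Finite := Set.finite_of_ncard_ne_zero (by omega)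
  have hTfin : (S \ {p}).Finite := hSfin.subset Set.diff_subset
  have hVrank : Module.finrank F (Fin n → F) = n := Module.finrank_fin_fun F
  have hprank : Module.finrank F p = 1 := hS p hp
  have hArank : Module.finrank F p.dualAnnihilator = n - 1 := by
    rw [finrank_dualAnnihilator, hprank]
  have hproper : ∀ q ∈ S \ {p},
      Submodule.comap p.dualAnnihilator.subtype (p ⊔ q).dualAnnihilator ≠ ⊤ := by
    intro q hq htop
    have hAle : p.dualAnnihilator ≤ (p ⊔ q).dualAnnihilator :=
      (Submodule.comap_subtype_eq_top).mp htop
    have hqS : q ∈ S := hq.1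
    have hqp : q ≠ p := hq.2
    have hplt : p < p ⊔ q := by
      refine lt_of_le_of_ne le_sup_left ?_
      intro he
      exact hqp (Submodule.eq_of_le_of_finrank_le (he ▸ le_sup_right)
        (by rw [hprank, hS q hqS]))
    have h1 : Module.finrank F ↥(p ⊔ q) ≤ n := by
      have := Submodule.finrank_le (p ⊔ q)
      omega
    have h2 : Module.finrank F p < Module.finrank F ↥(p ⊔ q) :=
      Submodule.finrank_lt_finrank_of_lt hplt
    have h3 := finrank_dualAnnihilator (F := F) (p ⊔ q)
    have h5 := Submodule.finrank_mono hAle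
    omega
  -- the finset of pulled-back annihilators
  have hcomap : ∀ q : Submodule F (Fin n → F),
      ∃ B : Submodule F p.dualAnnihilator,
        B = Submodule.comap p.dualAnnihilator.subtype (p ⊔ q).dualAnnihilator :=
    fun q => ⟨_, rfl⟩
  choose f hf using hcomap
  obtain ⟨x, hx⟩ := avoid_finset (F := F) (M := p.dualAnnihilator) (hTfin.toFinset.image f)
    (by
      intro B hB
      obtain ⟨q, hq, rfl⟩ := Finset.mem_image.mp hB
      rw [hf]
      exact hproper q (hTfin.mem_toFinset.mp hq))
    (by
      have h1 : (hTfin.toFinset.image f).card ≤ hTfin.toFinset.card :=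
        Finset.card_image_le
      have h2 : hTfin.toFinset.card = (S \ {p}).ncard :=
        (Set.ncard_eq_toFinset_card _ hTfin).symm
      have h3 := Set.ncard_diff_singleton_of_mem hp
      have h4 : (hTfin.toFinset.image f).card ≤ 4 := by omega
      refine le_trans ?_ hF
      exact_mod_cast Nat.cast_le.mpr h4)
  set φ : Module.Dual F (Fin n → F) := (x : Module.Dual F (Fin n → F)) with hφ
  have hφA : φ ∈ p.dualAnnihilator := x.2
  have hxnot : ∀ q ∈ S \ {p}, φ ∉ (p ⊔ q).dualAnnihilator := by
    intro q hq hmem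
    refine hx (f q) (Finset.mem_image.mpr ⟨q, hTfin.mem_toFinset.mpr hq, rfl⟩) ?_
    rw [hf]
    simpa using hmem
  have hTne : (S \ {p}).Nonempty := by
    rw [Set.nonempty_iff_ne_empty]
    intro he
    have hsub : S ⊆ {p} := fun q hq => by
      by_contra h
      exact (Set.eq_empty_iff_forall_notMem.mp he) q ⟨hq, h⟩
    have := Set.ncard_le_ncard hsub (Set.finite_singleton p)
    simp [hcard] at this
  obtain ⟨q0, hq0⟩ := hTne
  have hφne : φ ≠ 0 := fun h0 =>
    hxnot q0 hq0 (h0 ▸ (p ⊔ q0).dualAnnihilator.zero_mem)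
  refine ⟨LinearMap.ker φ, ?_, ?_, ?_⟩
  · have hrange : LinearMap.range φ = ⊤ := by
      obtain ⟨v, hv⟩ : ∃ v, φ v ≠ 0 := by
        by_contra h
        push_neg at h
        exact hφne (LinearMap.ext fun v => h v)
      rw [eq_top_iff]
      intro c _
      exact ⟨(c / φ v) • v, by simp [div_mul_cancel₀ c hv]⟩
    have h1 := LinearMap.finrank_range_add_finrank_ker φ
    rw [hrange] at h1
    have h2 : Module.finrank F (⊤ : Submodule F F) = 1 := by
      rw [finrank_top]; exact Module.finrank_self F
    omega
  · intro v hv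
    rw [LinearMap.mem_ker]
    exact (Submodule.mem_dualAnnihilator φ).mp hφA v hv
  · intro q hq hqp hqle
    refine hxnot q ⟨hq, hqp⟩ ((Submodule.mem_dualAnnihilator φ).mpr ?_)
    intro w hw
    obtain ⟨a, ha, b, hb, rfl⟩ := Submodule.mem_sup.mp hw
    have h1 : φ a = 0 := (Submodule.mem_dualAnnihilator φ).mp hφA a ha
    have h2 : φ b = 0 := LinearMap.mem_ker.mp (hqle hb)
    simp [h1, h2]
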